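/- Pohozaev-type identity bound: Let γ > 0, ρ ≥ 0, ν₁, ν₂ ≥ 0, N ≥ (pρ)/2 + ((p−2)γ)/2, and let F be C², p-homogeneous (p > 2) with F > 0 off the origin. Let (u,v) ∈ C²([0,∞), ℝ²) be a bounded solution of −(e^{−γt}u')' + ν₁ e^{−ρt} u = e^{−Nt} ∂_u F(u,v), −(e^{−γt}v')' + ν₂ e^{−ρt} v = e^{−Nt} ∂_v F(u,v) on (0,∞) with u(0) = v(0) = 0. Then u'(0)² + v'(0)² ≥ (2(N+γ)/p) ∫₀^∞ ( ((e^{−γt}u)')² + ((e^{−γt}v)')² ) dt. -/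

import Mathlib

open Real Set Filter MeasureTheory intervalIntegral

lemma clm_pair (L : ℝ × ℝ →L[ℝ] ℝ) (a b : ℝ) :
    L (a, b) = a * L (1, 0) + b * L (0, 1) := by
  have h : (a, b) = a • ((1:ℝ), (0:ℝ)) + b • ((0:ℝ), (1:ℝ)) := by
    simp [Prod.ext_iff]
  rw [h, map_add, L.map_smul, L.map_smul, smul_eq_mul, smul_eq_mul]

lemma F_zero (p : ℝ) (hp : 0 < p) (F : ℝ × ℝ → ℝ)
    (hhom : ∀ t : ℝ, 0 < t → ∀ z : ℝ × ℝ, F (t • z) = t ^ p * F z) : F 0 = 0 := by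
  have h := hhom 2 (by norm_num) 0
  have h2 : (1:ℝ) < (2:ℝ) ^ p := by
    rw [Real.one_lt_rpow_iff_of_pos (by norm_num : (0:ℝ) < 2)]
    exact Or.inl ⟨by norm_num, hp⟩
  simp only [smul_zero] at h
  nlinarith [h2]

lemma euler_id (p : ℝ) (hp : 2 < p) (F : ℝ × ℝ → ℝ) (hF : ContDiff ℝ 2 F)
    (hhom : ∀ t : ℝ, 0 < t → ∀ z : ℝ × ℝ, F (t • z) = t ^ p * F z) (z : ℝ × ℝ) :
    (fderiv ℝ F z) z = p * F z := by
  rcases eq_or_ne z 0 with rfl | hz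
  · rw [F_zero p (by linarith) F hhom]
    simp
  · have hd : HasFDerivAt F (fderiv ℝ F z) z :=
      (hF.differentiable (by norm_num)).differentiableAt.hasFDerivAt
    have hc : HasDerivAt (fun t : ℝ => t • z) z 1 := by
      simpa using (hasDerivAt_id (1:ℝ)).smul_const z
    have h1 : HasDerivAt (fun t : ℝ => F (t • z)) ((fderiv ℝ F z) z) 1 := by
      have hd' : HasFDerivAt F (fderiv ℝ F z) ((1:ℝ) • z) := by simpa using hd
      have := hd'.comp_hasDerivAt (1:ℝ) hc
      exact this
    have h2 : HasDerivAt (fun t : ℝ => t ^ p * F z) (p * F z) 1 := by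
      have := (Real.hasDerivAt_rpow_const (x := 1) (p := p) (Or.inl one_ne_zero)).mul_const (F z)
      simpa using this
    have hEq : (fun t : ℝ => F (t • z)) =ᶠ[nhds 1] fun t : ℝ => t ^ p * F z := by
      filter_upwards [isOpen_Ioi.mem_nhds (show (0:ℝ) < 1 by norm_num)] with t ht
      exact hhom t ht z
    exact (h1.congr_of_eventuallyEq hEq.symm).unique h2

set_option maxHeartbeats 1000000 in
theorem stmt10 (p γ ρ ν₁ ν₂ N : ℝ) (hp : 2 < p) (hγ : 0 < γ) (hρ : 0 ≤ ρ)
    (hν₁ : 0 ≤ ν₁) (hν₂ : 0 ≤ ν₂) (hN : p * ρ / 2 + (p - 2) * γ / 2 ≤ N)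
    (F : ℝ × ℝ → ℝ) (hF : ContDiff ℝ 2 F)
    (hhom : ∀ t : ℝ, 0 < t → ∀ z : ℝ × ℝ, F (t • z) = t ^ p * F z)
    (hpos : ∀ z : ℝ × ℝ, z ≠ 0 → 0 < F z)
    (u v u' v' w₁ w₂ : ℝ → ℝ)
    (hbd : ∃ C, ∀ t ∈ Set.Ici (0:ℝ), |u t| ≤ C ∧ |v t| ≤ C)
    (hu : ∀ t ∈ Set.Ici (0:ℝ), HasDerivWithinAt u (u' t) (Set.Ici 0) t)
    (hv : ∀ t ∈ Set.Ici (0:ℝ), HasDerivWithinAt v (v' t) (Set.Ici 0) t)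
    (hw₁ : ∀ t ∈ Set.Ici (0:ℝ),
      HasDerivWithinAt (fun s => Real.exp (-γ * s) * u' s) (w₁ t) (Set.Ici 0) t)
    (hw₂ : ∀ t ∈ Set.Ici (0:ℝ),
      HasDerivWithinAt (fun s => Real.exp (-γ * s) * v' s) (w₂ t) (Set.Ici 0) t)
    (hcu : ContinuousOn u' (Set.Ici 0)) (hcv : ContinuousOn v' (Set.Ici 0))
    (hequ : ∀ t ∈ Set.Ioi (0:ℝ), -w₁ t + ν₁ * Real.exp (-ρ * t) * u t
        = Real.exp (-N * t) * fderiv ℝ F (u t, v t) (1, 0))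
    (heqv : ∀ t ∈ Set.Ioi (0:ℝ), -w₂ t + ν₂ * Real.exp (-ρ * t) * v t
        = Real.exp (-N * t) * fderiv ℝ F (u t, v t) (0, 1))
    (hu0 : u 0 = 0) (hv0 : v 0 = 0) :
    2 * (N + γ) / p * ∫ t in Set.Ioi (0:ℝ),
        ((Real.exp (-γ * t) * (u' t - γ * u t)) ^ 2
          + (Real.exp (-γ * t) * (v' t - γ * v t)) ^ 2)
      ≤ u' 0 ^ 2 + v' 0 ^ 2 := by
  obtain ⟨C, hC⟩ := hbd
  have hC0 : 0 ≤ C := le_trans (abs_nonneg _) (hC 0 Set.self_mem_Ici).1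
  have hp0 : (0:ℝ) < p := by linarith
  have hN0 : (0:ℝ) < N + γ := by nlinarith
  set k : ℝ := (N + γ) / p with hk
  set θ : ℝ := ((p - 1) * γ - N) / p with hθ
  set c₂ : ℝ := θ - (γ - ρ) / 2 with hc₂
  have hk0 : 0 < k := div_pos hN0 hp0
  have hc2 : c₂ ≤ 0 := by
    rw [hc₂, hθ, sub_nonpos, div_le_iff₀ hp0]
    nlinarith
  have hFz : F 0 = 0 := F_zero p (by linarith) F hhom
  have hFnn : ∀ z : ℝ × ℝ, 0 ≤ F z := by
    intro z
    rcases eq_or_ne z 0 with rfl | hz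
    · exact le_of_eq hFz.symm
    · exact (hpos z hz).le
  have heul : ∀ t : ℝ, u t * (fderiv ℝ F (u t, v t)) (1, 0)
      + v t * (fderiv ℝ F (u t, v t)) (0, 1) = p * F (u t, v t) := by
    intro t
    have h := euler_id p hp F hF hhom (u t, v t)
    rwa [clm_pair] at h
  -- continuity facts
  have hcU : ContinuousOn u (Set.Ici 0) := fun t ht => (hu t ht).continuousWithinAt
  have hcV : ContinuousOn v (Set.Ici 0) := fun t ht => (hv t ht).continuousWithinAt
  set g : ℝ → ℝ := fun t => (Real.exp (-γ * t) * (u' t - γ * u t)) ^ 2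
      + (Real.exp (-γ * t) * (v' t - γ * v t)) ^ 2 with hg
  have hgnn : ∀ t, 0 ≤ g t := fun t => by positivity
  have hexpc : ∀ c : ℝ, Continuous fun s : ℝ => Real.exp (c * s) := by
    intro c; fun_prop
  have hcg : ContinuousOn g (Set.Ici 0) := by
    apply ContinuousOn.add
    · exact (((hexpc (-γ)).continuousOn).mul
        (hcu.sub (continuousOn_const.mul hcU))).pow 2
    · exact (((hexpc (-γ)).continuousOn).mul
        (hcv.sub (continuousOn_const.mul hcV))).pow 2
  set h : ℝ → ℝ := fun t => Real.exp (-(γ + ρ) * t) * (ν₁ * u t ^ 2 + ν₂ * v t ^ 2) with hh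
  have hhnn : ∀ t, 0 ≤ h t := fun t => by
    have := sq_nonneg (u t); have := sq_nonneg (v t); positivity
  have hch : ContinuousOn h (Set.Ici 0) := by
    apply ContinuousOn.mul
    · exact (hexpc (-(γ+ρ))).continuousOn
    · exact ((continuousOn_const.mul (hcU.pow 2)).add (continuousOn_const.mul (hcV.pow 2)))
  set R : ℝ → ℝ := fun s =>
      ((Real.exp (-γ * s) * (u' s - γ * u s)) ^ 2
        + (Real.exp (-γ * s) * (v' s - γ * v s)) ^ 2) / 2
      + Real.exp (-(N + γ) * s) * F (u s, v s)
      - Real.exp (-(γ + ρ) * s) * (ν₁ * u s ^ 2 + ν₂ * v s ^ 2) / 2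
      + θ * ((Real.exp (-γ * s) * u' s) * (Real.exp (-γ * s) * u s)
            + (Real.exp (-γ * s) * v' s) * (Real.exp (-γ * s) * v s))
      - θ * γ / 2 * ((Real.exp (-γ * s) * u s) ^ 2 + (Real.exp (-γ * s) * v s) ^ 2)
    with hR
  have hRderiv : ∀ t ∈ Set.Ioi (0:ℝ), HasDerivAt R (-k * g t + c₂ * h t) t := by
    intro t ht
    have ht' : t ∈ Set.Ici (0:ℝ) := Set.mem_Ici.mpr (le_of_lt ht)
    have hw1t : w₁ t = ν₁ * Real.exp (-ρ * t) * u t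
        - Real.exp (-N * t) * (fderiv ℝ F (u t, v t)) (1, 0) := by
      linarith [hequ t ht]
    have hw2t : w₂ t = ν₂ * Real.exp (-ρ * t) * v t
        - Real.exp (-N * t) * (fderiv ℝ F (u t, v t)) (0, 1) := by
      linarith [heqv t ht]
    have hE : ∀ c : ℝ, HasDerivAt (fun s : ℝ => Real.exp (c * s)) (c * Real.exp (c * t)) t := by
      intro c
      have h1 : HasDerivAt (fun s : ℝ => c * s) c t := by
        simpa using (hasDerivAt_id t).const_mul c
      simpa [mul_comm] using h1.exp
    have hgu : HasDerivWithinAt (fun s => Real.exp (-γ * s) * u s)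
        (Real.exp (-γ * t) * (u' t - γ * u t)) (Set.Ici 0) t := by
      have h2 := ((hE (-γ)).hasDerivWithinAt).mul (hu t ht')
      exact h2.congr_deriv (by ring)
    have hgv : HasDerivWithinAt (fun s => Real.exp (-γ * s) * v s)
        (Real.exp (-γ * t) * (v' t - γ * v t)) (Set.Ici 0) t := by
      have h2 := ((hE (-γ)).hasDerivWithinAt).mul (hv t ht')
      exact h2.congr_deriv (by ring)
    have ha₁ : HasDerivWithinAt (fun s => Real.exp (-γ * s) * (u' s - γ * u s))
        (w₁ t - γ * (Real.exp (-γ * t) * (u' t - γ * u t))) (Set.Ici 0) t := by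
      have h2 := (hw₁ t ht').sub (hgu.const_mul γ)
      exact h2.congr (fun s _ => by simp only [Pi.sub_apply]; ring) (by simp only [Pi.sub_apply]; ring)
    have ha₂ : HasDerivWithinAt (fun s => Real.exp (-γ * s) * (v' s - γ * v s))
        (w₂ t - γ * (Real.exp (-γ * t) * (v' t - γ * v t))) (Set.Ici 0) t := by
      have h2 := (hw₂ t ht').sub (hgv.const_mul γ)
      exact h2.congr (fun s _ => by simp only [Pi.sub_apply]; ring) (by simp only [Pi.sub_apply]; ring)
    have hFc : HasDerivWithinAt (fun s => F (u s, v s))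
        (u' t * (fderiv ℝ F (u t, v t)) (1, 0) + v' t * (fderiv ℝ F (u t, v t)) (0, 1))
        (Set.Ici 0) t := by
      have hz := (hu t ht').prodMk (hv t ht')
      have hfd : HasFDerivAt F (fderiv ℝ F (u t, v t)) (u t, v t) :=
        (hF.differentiable (by norm_num)).differentiableAt.hasFDerivAt
      have h3 := hfd.comp_hasDerivWithinAt t hz
      rw [clm_pair] at h3
      exact h3
    have hν : HasDerivWithinAt (fun s => ν₁ * u s ^ 2 + ν₂ * v s ^ 2)
        (ν₁ * (2 * u t * u' t) + ν₂ * (2 * v t * v' t)) (Set.Ici 0) t := by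
      have h5 := (((hu t ht').pow 2).const_mul ν₁).add (((hv t ht').pow 2).const_mul ν₂)
      exact h5.congr_deriv (by push_cast; ring)
    have hBIG := ((((((ha₁.pow 2).add (ha₂.pow 2)).div_const 2).add
        (((hE (-(N + γ))).hasDerivWithinAt).mul hFc)).sub
        ((((hE (-(γ + ρ))).hasDerivWithinAt).mul hν).div_const 2)).add
        ((((hw₁ t ht').mul hgu).add ((hw₂ t ht').mul hgv)).const_mul θ)).sub
        (((hgu.pow 2).add (hgv.pow 2)).const_mul (θ * γ / 2))
    rw [hR]
    refine HasDerivWithinAt.hasDerivAt ?_ (Ici_mem_nhds ht)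
    refine hBIG.congr_deriv (Eq.symm ?_)
    have eA : Real.exp (-(N + γ) * t) = Real.exp (-N * t) * Real.exp (-γ * t) := by
      rw [← Real.exp_add]; ring_nf
    have eB : Real.exp (-(γ + ρ) * t) = Real.exp (-γ * t) * Real.exp (-ρ * t) := by
      rw [← Real.exp_add]; ring_nf
    have hkθ : k = γ - θ := by rw [hk, hθ]; field_simp; ring
    have hθp : θ * p = (p - 1) * γ - N := by rw [hθ]; field_simp
    have hcc : c₂ = θ - (γ - ρ) / 2 := hc₂
    clear_value k θ c₂
    simp only [hg, hh]
    rw [hw1t, hw2t, eA, eB]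
    push_cast
    linear_combination ((Real.exp (-N * t) * Real.exp (-γ * t)) * (θ - γ)) * heul t
      + (Real.exp (-γ * t) * Real.exp (-ρ * t) * (ν₁ * u t ^ 2 + ν₂ * v t ^ 2)) * hcc
      - ((Real.exp (-γ * t) * (u' t - γ * u t)) ^ 2
          + (Real.exp (-γ * t) * (v' t - γ * v t)) ^ 2) * hkθ
      + (Real.exp (-N * t) * Real.exp (-γ * t) * F (u t, v t)) * hθp
  have hRcont : ContinuousOn R (Set.Ici 0) := by
    rw [hR]
    have hcF : ContinuousOn (fun s => F (u s, v s)) (Set.Ici 0) :=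
      hF.continuous.comp_continuousOn (hcU.prodMk hcV)
    have hceu : ContinuousOn (fun s => Real.exp (-γ * s) * u s) (Set.Ici 0) :=
      (hexpc (-γ)).continuousOn.mul hcU
    have hcev : ContinuousOn (fun s => Real.exp (-γ * s) * v s) (Set.Ici 0) :=
      (hexpc (-γ)).continuousOn.mul hcV
    refine ContinuousOn.sub (ContinuousOn.add (ContinuousOn.sub (ContinuousOn.add ?_ ?_) ?_) ?_) ?_
    · exact hcg.div_const 2
    · exact (hexpc (-(N + γ))).continuousOn.mul hcF
    · exact ((hexpc (-(γ + ρ))).continuousOn.mul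
        ((continuousOn_const.mul (hcU.pow 2)).add (continuousOn_const.mul (hcV.pow 2)))).div_const 2
    · exact continuousOn_const.mul
        ((((hexpc (-γ)).continuousOn.mul hcu).mul hceu).add
          (((hexpc (-γ)).continuousOn.mul hcv).mul hcev))
    · exact continuousOn_const.mul ((hceu.pow 2).add (hcev.pow 2))
  have hR0 : R 0 = (u' 0 ^ 2 + v' 0 ^ 2) / 2 := by
    have hF00 : F (0, 0) = 0 := hFz
    simp only [hR, hu0, hv0, hF00, mul_zero, Real.exp_zero, one_mul, sub_zero]
    ring
  set M : ℝ := (θ ^ 2 + |θ| * γ) * C ^ 2 + (ν₁ + ν₂) * C ^ 2 / 2 with hM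
  have hM0 : 0 ≤ M := by positivity
  have hRT : ∀ T, 0 ≤ T → -(M * Real.exp (-γ * T)) ≤ R T := by
    intro T hT
    have huC := (hC T hT).1
    have hvC := (hC T hT).2
    have huC' := abs_le.mp huC
    have hvC' := abs_le.mp hvC
    have husq : u T ^ 2 ≤ C ^ 2 := sq_le_sq' huC'.1 huC'.2
    have hvsq : v T ^ 2 ≤ C ^ 2 := sq_le_sq' hvC'.1 hvC'.2
    simp only [hR, hM]
    have hEF : 0 ≤ Real.exp (-(N + γ) * T) * F (u T, v T) :=
      mul_nonneg (Real.exp_pos _).le (hFnn _)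
    clear_value M R h g c₂ k θ
    clear hR hg hh hk hθ hc₂ hM hRderiv hRcont hR0 hc2 hk0 hM0 hgnn hhnn hcg hch
      heul hFz hequ heqv hw₁ hw₂ hu hv hcu hcv hcU hcV hexpc hC hhom hpos hF hFnn
      hN0 hN hp hp0 hu0 hv0 huC hvC huC' hvC'
    set X := Real.exp (-γ * T) with hX
    have hX0 : 0 < X := Real.exp_pos _
    have hX1 : X ≤ 1 := by
      rw [hX, Real.exp_le_one_iff]
      nlinarith
    set b1 := X * u T with hb1
    set b2 := X * v T with hb2
    set a1 := X * (u' T - γ * u T) with ha1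
    set a2 := X * (v' T - γ * v T) with ha2
    have e1 : X * u' T = a1 + γ * b1 := by rw [ha1, hb1]; ring
    have e2 : X * v' T = a2 + γ * b2 := by rw [ha2, hb2]; ring
    rw [e1, e2]
    have hexp2 : Real.exp (-(γ + ρ) * T) ≤ X := by
      rw [hX]
      refine Real.exp_le_exp.2 ?_
      have := mul_nonneg hρ hT
      linarith
    have hEν : Real.exp (-(γ + ρ) * T) * (ν₁ * u T ^ 2 + ν₂ * v T ^ 2)
        ≤ X * ((ν₁ + ν₂) * C ^ 2) := by
      have h2 : ν₁ * u T ^ 2 + ν₂ * v T ^ 2 ≤ (ν₁ + ν₂) * C ^ 2 := by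
        have h21 := mul_le_mul_of_nonneg_left husq hν₁
        have h22 := mul_le_mul_of_nonneg_left hvsq hν₂
        nlinarith [h21, h22]
      have h3 : 0 ≤ ν₁ * u T ^ 2 + ν₂ * v T ^ 2 := by positivity
      exact mul_le_mul hexp2 h2 h3 hX0.le
    have hXX : X ^ 2 ≤ X := by
      have hx2 := mul_le_mul_of_nonneg_left hX1 hX0.le
      rw [mul_one] at hx2
      calc X ^ 2 = X * X := sq X
        _ ≤ X := hx2
    have hb1sq : b1 ^ 2 ≤ X * C ^ 2 := by
      calc b1 ^ 2 = X ^ 2 * u T ^ 2 := by rw [hb1]; ring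
        _ ≤ X ^ 2 * C ^ 2 := mul_le_mul_of_nonneg_left husq (sq_nonneg X)
        _ ≤ X * C ^ 2 := mul_le_mul_of_nonneg_right hXX (sq_nonneg C)
    have hb2sq : b2 ^ 2 ≤ X * C ^ 2 := by
      calc b2 ^ 2 = X ^ 2 * v T ^ 2 := by rw [hb2]; ring
        _ ≤ X ^ 2 * C ^ 2 := mul_le_mul_of_nonneg_left hvsq (sq_nonneg X)
        _ ≤ X * C ^ 2 := mul_le_mul_of_nonneg_right hXX (sq_nonneg C)
    have core1 : 0 ≤ (a1 + θ * b1) ^ 2 := sq_nonneg _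
    have core2 : 0 ≤ (a2 + θ * b2) ^ 2 := sq_nonneg _
    have h5 : 0 ≤ (θ + |θ|) * (b1 ^ 2 + b2 ^ 2) :=
      mul_nonneg (by linarith [neg_abs_le θ]) (by positivity)
    have h6 : (θ ^ 2 + |θ| * γ) * (b1 ^ 2 + b2 ^ 2) ≤ (θ ^ 2 + |θ| * γ) * (2 * (X * C ^ 2)) :=
      mul_le_mul_of_nonneg_left (by linarith) (by positivity)
    clear_value X b1 b2 a1 a2
    have q1 : -(θ ^ 2 / 2) * b1 ^ 2 ≤ a1 ^ 2 / 2 + θ * (a1 * b1) := by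
      nlinarith [core1]
    have q2 : -(θ ^ 2 / 2) * b2 ^ 2 ≤ a2 ^ 2 / 2 + θ * (a2 * b2) := by
      nlinarith [core2]
    have q3 : -(|θ| * γ / 2) * (b1 ^ 2 + b2 ^ 2) ≤ θ * γ / 2 * (b1 ^ 2 + b2 ^ 2) := by
      nlinarith [mul_nonneg hγ.le h5]
    have q4 : θ ^ 2 / 2 * (b1 ^ 2 + b2 ^ 2) ≤ θ ^ 2 * (X * C ^ 2) := by
      nlinarith [sq_nonneg θ, hb1sq, hb2sq]
    have q5 : |θ| * γ / 2 * (b1 ^ 2 + b2 ^ 2) ≤ |θ| * γ * (X * C ^ 2) := by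
      nlinarith [mul_nonneg (abs_nonneg θ) hγ.le, hb1sq, hb2sq]
    have expand : (a1 ^ 2 + a2 ^ 2) / 2
        + Real.exp (-(N + γ) * T) * F (u T, v T)
        - Real.exp (-(γ + ρ) * T) * (ν₁ * u T ^ 2 + ν₂ * v T ^ 2) / 2
        + θ * ((a1 + γ * b1) * b1 + (a2 + γ * b2) * b2)
        - θ * γ / 2 * (b1 ^ 2 + b2 ^ 2)
        = (a1 ^ 2 / 2 + θ * (a1 * b1)) + (a2 ^ 2 / 2 + θ * (a2 * b2))
          + θ * γ / 2 * (b1 ^ 2 + b2 ^ 2)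
          + Real.exp (-(N + γ) * T) * F (u T, v T)
          - Real.exp (-(γ + ρ) * T) * (ν₁ * u T ^ 2 + ν₂ * v T ^ 2) / 2 := by ring
    rw [expand]
    linarith [q1, q2, q3, q4, q5, hEF, hEν]
  have key : ∀ T, 0 ≤ T → k * ∫ s in (0:ℝ)..T, g s ≤ R 0 - R T := by
    intro T hT
    have hderiv : ∀ x ∈ Set.Ioo (0:ℝ) T,
        HasDerivWithinAt R ((fun s => -k * g s + c₂ * h s) x) (Set.Ioi x) x :=
      fun x hx => ((hRderiv x hx.1).hasDerivWithinAt)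
    have hcontR : ContinuousOn R (Set.Icc 0 T) := hRcont.mono Set.Icc_subset_Ici_self
    have hgi : IntervalIntegrable g volume 0 T := by
      apply ContinuousOn.intervalIntegrable
      rw [uIcc_of_le hT]
      exact hcg.mono Set.Icc_subset_Ici_self
    have hhi : IntervalIntegrable h volume 0 T := by
      apply ContinuousOn.intervalIntegrable
      rw [uIcc_of_le hT]
      exact hch.mono Set.Icc_subset_Ici_self
    have hint : IntervalIntegrable (fun s => -k * g s + c₂ * h s) volume 0 T :=
      (hgi.const_mul (-k)).add (hhi.const_mul c₂)
    have hftc := intervalIntegral.integral_eq_sub_of_hasDeriv_right_of_le hT hcontR hderiv hint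
    rw [intervalIntegral.integral_add (hgi.const_mul (-k)) (hhi.const_mul c₂),
      intervalIntegral.integral_const_mul, intervalIntegral.integral_const_mul] at hftc
    have hint_h : 0 ≤ ∫ s in (0:ℝ)..T, h s :=
      intervalIntegral.integral_nonneg hT fun x _ => hhnn x
    have hch2 : c₂ * ∫ s in (0:ℝ)..T, h s ≤ 0 :=
      mul_nonpos_iff.2 (Or.inr ⟨hc2, hint_h⟩)
    set I := ∫ s in (0:ℝ)..T, g s with hI
    set J := ∫ s in (0:ℝ)..T, h s with hJ
    clear_value I J k c₂ R
    linarith [hftc, hch2]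
  -- conclude
  have bound : ∀ T, 0 ≤ T → ∫ s in (0:ℝ)..T, g s ≤ ((u' 0 ^ 2 + v' 0 ^ 2) / 2 + M * Real.exp (-γ * T)) / k := by
    intro T hT
    rw [le_div_iff₀ hk0]
    have h1 := key T hT
    have h2 := hRT T hT
    rw [hR0] at h1
    rw [mul_comm]
    set I := ∫ s in (0:ℝ)..T, g s with hI
    clear_value I k M R θ c₂
    linarith
  have hgIoc : ∀ T : ℝ, IntegrableOn g (Set.Ioc 0 T) := by
    intro T
    rcases le_or_gt T 0 with hT | hT
    · rw [Set.Ioc_eq_empty (by simpa using hT)]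
      exact integrableOn_empty
    · exact ((hcg.mono (Set.Icc_subset_Ici_self)).integrableOn_Icc).mono_set Set.Ioc_subset_Icc_self
  have hgInt : IntegrableOn g (Set.Ioi 0) := by
    refine MeasureTheory.integrableOn_Ioi_of_intervalIntegral_norm_bounded
      (((u' 0 ^ 2 + v' 0 ^ 2) / 2 + M) / k) 0 (fun T : ℝ => hgIoc T) tendsto_id ?_
    filter_upwards [eventually_ge_atTop (0:ℝ)] with T hT
    have hnorm : ∫ x in (0:ℝ)..T, ‖g x‖ = ∫ x in (0:ℝ)..T, g x := by
      apply intervalIntegral.integral_congr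
      intro x _
      exact Real.norm_of_nonneg (hgnn x)
    rw [hnorm]
    refine le_trans (bound T hT) ?_
    have hexple : Real.exp (-γ * T) ≤ 1 := by
      rw [Real.exp_le_one_iff]
      nlinarith
    refine div_le_div_of_nonneg_right ?_ hk0.le
    have hMe : M * Real.exp (-γ * T) ≤ M * 1 := mul_le_mul_of_nonneg_left hexple hM0
    rw [mul_one] at hMe
    clear_value M k
    linarith [hMe]
  have hlim : Tendsto (fun T : ℝ => ∫ x in (0:ℝ)..T, g x) atTop
      (nhds (∫ x in Set.Ioi (0:ℝ), g x)) :=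
    MeasureTheory.intervalIntegral_tendsto_integral_Ioi 0 hgInt tendsto_id
  have hexp0 : Tendsto (fun T : ℝ => Real.exp (-γ * T)) atTop (nhds 0) := by
    have h1 : Tendsto (fun T : ℝ => γ * T) atTop atTop :=
      Tendsto.const_mul_atTop hγ tendsto_id
    have h2 := Real.tendsto_exp_neg_atTop_nhds_zero.comp h1
    exact h2.congr fun T => by simp [Function.comp, neg_mul]
  have hlim2 : Tendsto (fun T : ℝ => ((u' 0 ^ 2 + v' 0 ^ 2) / 2 + M * Real.exp (-γ * T)) / k)
      atTop (nhds (((u' 0 ^ 2 + v' 0 ^ 2) / 2) / k)) := by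
    have : Tendsto (fun T : ℝ => (u' 0 ^ 2 + v' 0 ^ 2) / 2 + M * Real.exp (-γ * T)) atTop
        (nhds ((u' 0 ^ 2 + v' 0 ^ 2) / 2 + M * 0)) :=
      tendsto_const_nhds.add (tendsto_const_nhds.mul hexp0)
    simpa using this.div_const k
  have hIle : (∫ x in Set.Ioi (0:ℝ), g x) ≤ ((u' 0 ^ 2 + v' 0 ^ 2) / 2) / k := by
    refine le_of_tendsto_of_tendsto hlim hlim2 ?_
    filter_upwards [eventually_ge_atTop (0:ℝ)] with T hT
    exact bound T hT
  have hfin : 2 * (N + γ) / p * ∫ x in Set.Ioi (0:ℝ), g x ≤ u' 0 ^ 2 + v' 0 ^ 2 := by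
    have h2k : 2 * (N + γ) / p = 2 * k := by rw [hk]; ring
    rw [h2k]
    have := mul_le_mul_of_nonneg_left hIle (by linarith : (0:ℝ) ≤ 2 * k)
    calc 2 * k * ∫ x in Set.Ioi (0:ℝ), g x ≤ 2 * k * (((u' 0 ^ 2 + v' 0 ^ 2) / 2) / k) := this
      _ = u' 0 ^ 2 + v' 0 ^ 2 := by field_simp
  exact hfin
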